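/- Let I be a nonempty index set, let Σ be a finite-dimensional subcomplex of Σ(I) equipped with the ℓ₂-metric, and let A ⊂ |Σ| be a nonempty separable subset. Then the subcomplex Hull(A) has at most countably many vertices; more precisely, for every countable dense subset Z ⊂ A, the underlying set of Hull(A) equals the union over z ∈ Z of the faces σ(z). -/

import Mathlib

open Set Metric Filter MeasureTheory
open scoped ENNReal NNReal

noncomputable section

/-- The real Hilbert space `ℓ₂(I)`. -/
abbrev L2 (I : Type*) := lp (fun _ : I => ℝ) 2

/-- The standard unit vector `e_i ∈ ℓ₂(I)`. -/
noncomputable def stdVec {I : Type*} (i : I) : L2 I :=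
  letI := Classical.decEq I; lp.single 2 i 1

/-- The (closed) face of the full complex `Σ(I)` spanned by the vertices `e_i`, `i ∈ s`:
the convex hull of the corresponding standard unit vectors. -/
def faceSet {I : Type*} (s : Finset I) : Set (L2 I) := convexHull ℝ (stdVec '' (s : Set I))

/-- `x` lies in the relative interior of the face spanned by `s`. -/
def memRelInt {I : Type*} (s : Finset I) (x : L2 I) : Prop :=
  x ∈ faceSet s ∧ ∀ i ∈ s, 0 < x i

/-- A subcomplex of the full complex `Σ(I)`, encoded by the collection of the vertex sets of
its faces: a nonempty collection of finite nonempty subsets of `I`, closed under passing to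
nonempty subsets. -/
structure IsSubcomplex {I : Type*} (F : Set (Finset I)) : Prop where
  nonempty : F.Nonempty
  faces_nonempty : ∀ s ∈ F, s.Nonempty
  down_closed : ∀ s ∈ F, ∀ t : Finset I, t.Nonempty → t ⊆ s → t ∈ F

/-- The underlying set `|Σ| ⊆ ℓ₂(I)` of a (sub)complex: the union of its faces. -/
def cpxCarrier {I : Type*} (F : Set (Finset I)) : Set (L2 I) := ⋃ s ∈ F, faceSet s

/-- The open star of the face with vertex set `s` in the complex `F`: the union of the
relative interiors of all faces of `F` containing it. -/
def openStar {I : Type*} (F : Set (Finset I)) (s : Finset I) : Set (L2 I) :=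
  ⋃ t ∈ F, ⋃ (_ : s ⊆ t), {x | memRelInt t x}

/-- The smallest subcomplex of `F` whose underlying set contains `A`
(encoded by its collection of faces). -/
def hullFaces {I : Type*} (F : Set (Finset I)) (A : Set (L2 I)) : Set (Finset I) :=
  ⋂₀ {G : Set (Finset I) | G ⊆ F ∧ IsSubcomplex G ∧ A ⊆ cpxCarrier G}

/-- The pointwise (lower) Lipschitz constant at `x` of the restriction of `f` to `S`:
`liminf_{s → 0+} s⁻¹ · sup { d(f x, f y) : y ∈ S, d(x,y) < s }`, valued in `ℝ≥0∞`. -/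
noncomputable def lipWithin {X Y : Type*} [PseudoMetricSpace X] [PseudoMetricSpace Y]
    (f : X → Y) (S : Set X) (x : X) : ℝ≥0∞ :=
  Filter.liminf
    (fun s : ℝ => (⨆ y ∈ S ∩ Metric.ball x s, edist (f x) (f y)) / ENNReal.ofReal s)
    (nhdsWithin 0 (Set.Ioi 0))

/-- The pointwise (lower) Lipschitz constant `lip f (x)`, valued in `ℝ≥0∞`. -/
noncomputable def plip {X Y : Type*} [PseudoMetricSpace X] [PseudoMetricSpace Y]
    (f : X → Y) (x : X) : ℝ≥0∞ := lipWithin f Set.univ x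

/-- A subset `S` of a metric space is `c`-quasiconvex: any two of its points are joined by a
continuous curve in `S` of length (total variation) at most `c` times their distance. -/
def QuasiconvexSet {X : Type*} [PseudoMetricSpace X] (S : Set X) (c : ℝ) : Prop :=
  ∀ x ∈ S, ∀ y ∈ S, ∃ γ : ℝ → X, ContinuousOn γ (Set.Icc 0 1) ∧
    Set.MapsTo γ (Set.Icc 0 1) S ∧ γ 0 = x ∧ γ 1 = y ∧
    eVariationOn γ (Set.Icc 0 1) ≤ ENNReal.ofReal (c * dist x y)

/-- The intrinsic (length) metric of `S`: the infimal length of continuous curves in `S`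
joining `x` and `y`, valued in `ℝ≥0∞` (with `inf ∅ = ∞`). -/
noncomputable def intrinsicDist {X : Type*} [PseudoMetricSpace X] (S : Set X) (x y : X) : ℝ≥0∞ :=
  ⨅ (γ : ℝ → X) (_ : ContinuousOn γ (Set.Icc 0 1) ∧ Set.MapsTo γ (Set.Icc 0 1) S ∧
      γ 0 = x ∧ γ 1 = y),
    eVariationOn γ (Set.Icc 0 1)

/-- `X` has Nagata dimension `≤ n` with constant `c`: for every `s > 0` there is a covering of
`X` by sets of diameter `≤ c·s` such that every set of diameter `≤ s` meets at most `n + 1`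
members of the covering. -/
def NagataDimLE (X : Type*) [PseudoMetricSpace X] (n : ℕ) (c : ℝ) : Prop :=
  ∀ s : ℝ, 0 < s → ∃ B : Set (Set X),
    (∀ x : X, ∃ b ∈ B, x ∈ b) ∧
    (∀ b ∈ B, EMetric.diam b ≤ ENNReal.ofReal (c * s)) ∧
    (∀ A : Set X, EMetric.diam A ≤ ENNReal.ofReal s →
      {b | b ∈ B ∧ (b ∩ A).Nonempty}.encard ≤ (n : ℕ∞) + 1)

/-- `Y` is Lipschitz `k`-connected with constant `lam`: for `0 ≤ m ≤ k`, every `L`-Lipschitz map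
from the unit sphere `S^m ⊆ ℝ^{m+1}` to `Y` extends to a `lam·L`-Lipschitz map on the closed
unit ball `B^{m+1}`. -/
def LipschitzConnectedWith (Y : Type*) [PseudoMetricSpace Y] (k : ℕ) (lam : ℝ) : Prop :=
  ∀ m : ℕ, m ≤ k → ∀ L : ℝ, 0 < L →
    ∀ f : EuclideanSpace ℝ (Fin (m + 1)) → Y,
      LipschitzOnWith (Real.toNNReal L) f (Metric.sphere 0 1) →
      ∃ g : EuclideanSpace ℝ (Fin (m + 1)) → Y,
        LipschitzOnWith (Real.toNNReal (lam * L)) g (Metric.closedBall 0 1) ∧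
        Set.EqOn f g (Metric.sphere 0 1)

end

section Stmt3Aux
open scoped Classical
variable {I : Type*}

lemma stdVec_apply (i j : I) : stdVec i j = if j = i then (1:ℝ) else 0 := by
  unfold stdVec
  rw [lp.single_apply]
  split
  · subst ‹j = i›; simp
  · simp [Pi.single_apply, *]

lemma mem_faceSet_iff {s : Finset I} {x : L2 I} :
    x ∈ faceSet s ↔ (∀ i, 0 ≤ x i) ∧ (∀ i, i ∉ s → x i = 0) ∧ ∑ i ∈ s, x i = 1 := by
  classical
  constructor
  · intro hx
    have hsub : faceSet s ⊆ {y : L2 I | (∀ i, 0 ≤ y i) ∧ (∀ i, i ∉ s → y i = 0) ∧ ∑ i ∈ s, y i = 1} := by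
      apply convexHull_min
      · rintro _ ⟨i, hi, rfl⟩
        refine ⟨fun j => ?_, fun j hj => ?_, ?_⟩
        · rw [stdVec_apply]; split <;> norm_num
        · rw [stdVec_apply]; rw [if_neg]; rintro rfl; exact hj hi
        · simp only [stdVec_apply]
          rw [Finset.sum_ite_eq' s i (fun _ => (1:ℝ)), if_pos (Finset.mem_coe.mp hi)]
      · rintro y ⟨hy0, hy1, hy2⟩ z ⟨hz0, hz1, hz2⟩ a b ha hb hab
        have hcoord : ∀ j, (a • y + b • z) j = a * y j + b * z j := by
          intro j
          rw [lp.coeFn_add, Pi.add_apply, lp.coeFn_smul, lp.coeFn_smul]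
          simp
        refine ⟨fun j => ?_, fun j hj => ?_, ?_⟩
        · rw [hcoord]
          have := hy0 j; have := hz0 j; positivity
        · rw [hcoord, hy1 j hj, hz1 j hj]; ring
        · simp only [hcoord, Finset.sum_add_distrib, ← Finset.mul_sum, hy2, hz2]
          linarith
    exact hsub hx
  · rintro ⟨h0, h1, h2⟩
    have hx : x = ∑ i ∈ s, x i • stdVec i := by
      apply lp.ext
      rw [lp.coeFn_sum]
      funext j
      rw [Finset.sum_apply]
      have : ∀ i ∈ s, (x i • stdVec i) j = if j = i then x i else 0 := by
        intro i _
        rw [lp.coeFn_smul, Pi.smul_apply, stdVec_apply, smul_eq_mul]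
        split <;> ring
      rw [Finset.sum_congr rfl this]
      rw [Finset.sum_ite_eq s j (fun i => x i)]
      split
      · rfl
      · exact h1 j (by assumption)
    rw [hx, ← Finset.centerMass_eq_of_sum_1 _ _ h2]
    exact Finset.centerMass_mem_convexHull s (fun i _ => h0 i) (by rw [h2]; norm_num)
      (fun i hi => ⟨i, hi, rfl⟩)

/-- The support of `x` inside a face `s`. -/
noncomputable def fsupp (x : L2 I) (s : Finset I) : Finset I := s.filter (fun i => x i ≠ 0)

lemma mem_fsupp_iff {x : L2 I} {s : Finset I} {i : I} :
    i ∈ fsupp x s ↔ i ∈ s ∧ x i ≠ 0 := Finset.mem_filter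

lemma fsupp_subset (x : L2 I) (s : Finset I) : fsupp x s ⊆ s := Finset.filter_subset _ _


lemma sum_fsupp {x : L2 I} {s : Finset I} : ∑ i ∈ fsupp x s, x i = ∑ i ∈ s, x i :=
  Finset.sum_filter_ne_zero s

lemma fsupp_nonempty {x : L2 I} {s : Finset I} (hx : x ∈ faceSet s) : (fsupp x s).Nonempty := by
  rw [Finset.nonempty_iff_ne_empty]
  intro h
  have h2 := (mem_faceSet_iff.mp hx).2.2
  rw [← sum_fsupp, h] at h2
  simp at h2

lemma mem_faceSet_fsupp {x : L2 I} {s : Finset I} (hx : x ∈ faceSet s) :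
    x ∈ faceSet (fsupp x s) := by
  obtain ⟨h0, h1, h2⟩ := mem_faceSet_iff.mp hx
  refine mem_faceSet_iff.mpr ⟨h0, fun i hi => ?_, by rw [sum_fsupp]; exact h2⟩
  by_contra hne
  exact hi (mem_fsupp_iff.mpr ⟨by_contra fun hs => hne (h1 i hs), hne⟩)

lemma memRelInt_fsupp {x : L2 I} {s : Finset I} (hx : x ∈ faceSet s) :
    memRelInt (fsupp x s) x :=
  ⟨mem_faceSet_fsupp hx, fun i hi =>
    lt_of_le_of_ne ((mem_faceSet_iff.mp hx).1 i) (Ne.symm (mem_fsupp_iff.mp hi).2)⟩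

lemma eq_fsupp_of_memRelInt {x : L2 I} {s t : Finset I} (hx : x ∈ faceSet s)
    (ht : memRelInt t x) : t = fsupp x s := by
  obtain ⟨h0, h1, h2⟩ := mem_faceSet_iff.mp hx
  obtain ⟨htx, htpos⟩ := ht
  obtain ⟨_, ht1, _⟩ := mem_faceSet_iff.mp htx
  ext i
  rw [mem_fsupp_iff]
  constructor
  · intro hi
    have := htpos i hi
    exact ⟨by_contra fun hs => absurd (h1 i hs) (ne_of_gt this), ne_of_gt this⟩
  · rintro ⟨his, hne⟩
    by_contra hit
    exact hne (ht1 i hit)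

lemma fsupp_indep {x : L2 I} {s u : Finset I} (hs : x ∈ faceSet s) (hu : x ∈ faceSet u) :
    fsupp x s = fsupp x u :=
  eq_fsupp_of_memRelInt hu (memRelInt_fsupp hs)

lemma faceSet_mono {s t : Finset I} (h : s ⊆ t) : faceSet s ⊆ faceSet t :=
  convexHull_mono (Set.image_mono (by exact_mod_cast h))


lemma mem_cpxCarrier {F : Set (Finset I)} {x : L2 I} :
    x ∈ cpxCarrier F ↔ ∃ s ∈ F, x ∈ faceSet s := by
  simp [cpxCarrier]

/-- The explicit description of the hull of `A`. -/
def hullFaces' (F : Set (Finset I)) (A : Set (L2 I)) : Set (Finset I) :=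
  {t | t.Nonempty ∧ ∃ x ∈ A, ∃ s ∈ F, x ∈ faceSet s ∧ t ⊆ fsupp x s}

lemma hullFaces'_spec {F : Set (Finset I)} (hF : IsSubcomplex F) {A : Set (L2 I)}
    (hA : A.Nonempty) (hAsub : A ⊆ cpxCarrier F) :
    hullFaces' F A ⊆ F ∧ IsSubcomplex (hullFaces' F A) ∧ A ⊆ cpxCarrier (hullFaces' F A) := by
  have hsubF : hullFaces' F A ⊆ F := by
    rintro t ⟨htne, x, hxA, s, hsF, hxs, hts⟩
    exact hF.down_closed s hsF t htne (hts.trans (fsupp_subset x s))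
  have hAc : A ⊆ cpxCarrier (hullFaces' F A) := by
    intro x hxA
    obtain ⟨s, hsF, hxs⟩ := mem_cpxCarrier.mp (hAsub hxA)
    exact mem_cpxCarrier.mpr ⟨fsupp x s,
      ⟨fsupp_nonempty hxs, x, hxA, s, hsF, hxs, Finset.Subset.refl _⟩, mem_faceSet_fsupp hxs⟩
  refine ⟨hsubF, ⟨?_, fun t ht => ht.1, ?_⟩, hAc⟩
  · obtain ⟨x, hxA⟩ := hA
    obtain ⟨s, hsF, hxs⟩ := mem_cpxCarrier.mp (hAsub hxA)
    exact ⟨fsupp x s, fsupp_nonempty hxs, x, hxA, s, hsF, hxs, Finset.Subset.refl _⟩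
  · rintro t ⟨htne, x, hxA, s, hsF, hxs, hts⟩ t' ht'ne ht't
    exact ⟨ht'ne, x, hxA, s, hsF, hxs, ht't.trans hts⟩

lemma hullFaces_eq {F : Set (Finset I)} (hF : IsSubcomplex F) {A : Set (L2 I)}
    (hA : A.Nonempty) (hAsub : A ⊆ cpxCarrier F) :
    hullFaces F A = hullFaces' F A := by
  obtain ⟨h1, h2, h3⟩ := hullFaces'_spec hF hA hAsub
  refine subset_antisymm (Set.sInter_subset_of_mem ⟨h1, h2, h3⟩) (Set.subset_sInter ?_)
  rintro G ⟨hGF, hG, hAG⟩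
  rintro t ⟨htne, x, hxA, s, hsF, hxs, hts⟩
  obtain ⟨u, huG, hxu⟩ := mem_cpxCarrier.mp (hAG hxA)
  have hfe : fsupp x s = fsupp x u := fsupp_indep hxs hxu
  have hfu : fsupp x u ∈ G :=
    hG.down_closed u huG _ (hfe ▸ fsupp_nonempty hxs) (fsupp_subset x u)
  exact hG.down_closed _ hfu t htne (hfe ▸ hts)

/-- Density approximation: every point of `A` has its support contained in the support
of some point of a dense subset `Z`. -/
lemma exists_dense_supset {F : Set (Finset I)} {A Z : Set (L2 I)}
    (hAsub : A ⊆ cpxCarrier F) (hZ : Z ⊆ A) (hZd : A ⊆ closure Z)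
    {x : L2 I} {s : Finset I} (hxA : x ∈ A) (hxs : x ∈ faceSet s) :
    ∃ z ∈ Z, ∃ u ∈ F, z ∈ faceSet u ∧ fsupp x s ⊆ fsupp z u := by
  have hne : (fsupp x s).Nonempty := fsupp_nonempty hxs
  set ε : ℝ := (fsupp x s).inf' hne (fun i => x i) with hε
  have hεpos : 0 < ε := by
    rw [hε, Finset.lt_inf'_iff]
    intro i hi
    exact (memRelInt_fsupp hxs).2 i hi
  obtain ⟨z, hzZ, hdist⟩ := Metric.mem_closure_iff.mp (hZd hxA) ε hεpos
  obtain ⟨u, huF, hzu⟩ := mem_cpxCarrier.mp (hAsub (hZ hzZ))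
  refine ⟨z, hzZ, u, huF, hzu, fun i hi => ?_⟩
  have hxi : ε ≤ x i := Finset.inf'_le _ hi
  have hkey : |x i - z i| ≤ dist x z := by
    have h1 : (x - z) i = x i - z i := by rw [lp.coeFn_sub, Pi.sub_apply]
    have h2 : ‖(x - z) i‖ ≤ ‖x - z‖ :=
      lp.norm_apply_le_norm (by norm_num) (x - z) i
    rw [h1, Real.norm_eq_abs] at h2
    rwa [dist_eq_norm]
  have hzpos : 0 < z i := by
    have : |x i - z i| < ε := lt_of_le_of_lt hkey hdist
    have := abs_lt.mp this
    linarith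
  have hziu : i ∈ u := by
    by_contra hiu
    exact absurd ((mem_faceSet_iff.mp hzu).2.1 i hiu) (ne_of_gt hzpos)
  exact mem_fsupp_iff.mpr ⟨hziu, ne_of_gt hzpos⟩

end Stmt3Aux

/-- If `A ⊆ |Σ|` is nonempty and separable, then `Hull(A)` has at most
countably many vertices; more precisely, for every countable dense subset `Z ⊆ A` the
underlying set of `Hull(A)` is the union over `z ∈ Z` of the faces `σ(z)`. -/
theorem stmt_3 {I : Type*} [Nonempty I] (n : ℕ) (F : Set (Finset I)) (hF : IsSubcomplex F)
    (hdim : ∀ s ∈ F, s.card ≤ n + 1)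
    (A : Set (L2 I)) (hA : A.Nonempty) (hAsub : A ⊆ cpxCarrier F)
    (hsep : TopologicalSpace.IsSeparable A) :
    {i : I | ∃ s ∈ hullFaces F A, i ∈ s}.Countable ∧
      ∀ Z : Set (L2 I), Z ⊆ A → Z.Countable → A ⊆ closure Z →
        cpxCarrier (hullFaces F A) =
          ⋃ z ∈ Z, ⋃ s ∈ F, ⋃ (_ : memRelInt s z), faceSet s := by
  classical
  have hsepA : TopologicalSpace.SeparableSpace A := hsep.separableSpace
  obtain ⟨D, hDc, hDd⟩ := TopologicalSpace.exists_countable_dense (↥A)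
  set Z₀ : Set (L2 I) := Subtype.val '' D with hZ₀def
  have hZ₀A : Z₀ ⊆ A := by rintro _ ⟨⟨a, ha⟩, _, rfl⟩; exact ha
  have hZ₀c : Z₀.Countable := hDc.image _
  have hZ₀d : A ⊆ closure Z₀ := by
    intro a ha
    have h1 : (⟨a, ha⟩ : A) ∈ closure D := by rw [hDd.closure_eq]; trivial
    exact image_closure_subset_closure_image continuous_subtype_val
      (Set.mem_image_of_mem _ h1)
  have hkey : ∀ x ∈ A, ∀ s ∈ F, x ∈ faceSet s → ∀ Z : Set (L2 I), Z ⊆ A → A ⊆ closure Z →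
      ∃ z ∈ Z, ∃ u ∈ F, z ∈ faceSet u ∧ fsupp x s ⊆ fsupp z u := by
    intro x hxA s _ hxs Z hZA hZd
    exact exists_dense_supset hAsub hZA hZd hxA hxs
  rw [hullFaces_eq hF hA hAsub]
  constructor
  · have hcnt : (⋃ z ∈ Z₀, {i : I | z i ≠ 0}).Countable := by
      refine hZ₀c.biUnion fun z hz => ?_
      obtain ⟨u, huF, hzu⟩ := mem_cpxCarrier.mp (hAsub (hZ₀A hz))
      have hsub : {i : I | z i ≠ 0} ⊆ ↑u := fun i hi =>
        by_contra fun h => hi ((mem_faceSet_iff.mp hzu).2.1 i h)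
      exact ((u.finite_toSet).subset hsub).countable
    refine Set.Countable.mono ?_ hcnt
    rintro i ⟨t, ⟨htne, x, hxA, s, hsF, hxs, hts⟩, hit⟩
    obtain ⟨z, hzZ, u, huF, hzu, hfs⟩ := hkey x hxA s hsF hxs Z₀ hZ₀A hZ₀d
    have : i ∈ fsupp z u := hfs (hts hit)
    exact Set.mem_biUnion hzZ (mem_fsupp_iff.mp this).2
  · intro Z hZA hZc hZd
    ext y
    constructor
    · intro hy
      obtain ⟨t, ⟨htne, x, hxA, s, hsF, hxs, hts⟩, hyt⟩ := mem_cpxCarrier.mp hy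
      obtain ⟨z, hzZ, u, huF, hzu, hfs⟩ := hkey x hxA s hsF hxs Z hZA hZd
      have h1 : fsupp z u ∈ F :=
        hF.down_closed u huF _ (fsupp_nonempty hzu) (fsupp_subset z u)
      have h2 : memRelInt (fsupp z u) z := memRelInt_fsupp hzu
      have h3 : y ∈ faceSet (fsupp z u) := faceSet_mono (hts.trans hfs) hyt
      simp only [Set.mem_iUnion]
      exact ⟨z, hzZ, fsupp z u, h1, h2, h3⟩
    · intro hy
      simp only [Set.mem_iUnion] at hy
      obtain ⟨z, hzZ, s, hsF, hrel, hys⟩ := hy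
      have hzs : z ∈ faceSet s := hrel.1
      have heq : s = fsupp z s := eq_fsupp_of_memRelInt hzs hrel
      refine mem_cpxCarrier.mpr ⟨s, ⟨hF.faces_nonempty s hsF, z, hZA hzZ, s, hsF, hzs, ?_⟩, hys⟩
      rw [← heq]
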